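/- Let f be three times differentiable with |f'''(θ)[δ,δ,δ']| ≤ S·f''(θ)[δ,δ]·√⟨δ', Hδ'⟩, where H is positive definite and S ≥ 0. Then for all θ₁, θ₂, setting d = √⟨θ₂-θ₁, H(θ₂-θ₁)⟩: f(θ₂) - f(θ₁) - ⟨f'(θ₁), θ₂-θ₁⟩ ≤ ⟨θ₂-θ₁, f''(θ₁)(θ₂-θ₁)⟩ · (e^{Sd} - 1 - Sd)/(S²d²). -/

import Mathlib

open scoped RealInnerProductSpace

/-- Expansion of function values for generalized self-concordant functions: if
`|f'''(θ)[δ,δ,δ']| ≤ S·f''(θ)[δ,δ]·√⟨δ',Hδ'⟩` with `H` positive definite, then with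
`d = √⟨θ₂-θ₁, H(θ₂-θ₁)⟩` one has
`f(θ₂) - f(θ₁) - ⟨f'(θ₁),θ₂-θ₁⟩ ≤ ⟨θ₂-θ₁, f''(θ₁)(θ₂-θ₁)⟩·(e^{Sd}-1-Sd)/(S²d²)`. -/
theorem function_values_expansion_self_concordant
    {E : Type*} [NormedAddCommGroup E] [InnerProductSpace ℝ E] [FiniteDimensional ℝ E]
    (f : E → ℝ) (g : E → E) (Hess : E → E →L[ℝ] E) (T : E → E →L[ℝ] E →L[ℝ] E)
    (H : E →L[ℝ] E) (hHsa : IsSelfAdjoint H) (hHpos : ∀ z : E, z ≠ 0 → 0 < ⟪z, H z⟫)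
    (S : ℝ) (hS : 0 < S)
    (hg : ∀ θ, HasGradientAt f (g θ) θ)
    (hHess : ∀ θ, HasFDerivAt g (Hess θ) θ)
    (hT : ∀ θ, HasFDerivAt Hess (T θ) θ)
    (hbound : ∀ θ δ δ' : E,
      |⟪δ, T θ δ' δ⟫| ≤ S * ⟪δ, Hess θ δ⟫ * Real.sqrt ⟪δ', H δ'⟫)
    (θ₁ θ₂ : E) :
    f θ₂ - f θ₁ - ⟪g θ₁, θ₂ - θ₁⟫
      ≤ ⟪θ₂ - θ₁, Hess θ₁ (θ₂ - θ₁)⟫ *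
        (Real.exp (S * Real.sqrt ⟪θ₂ - θ₁, H (θ₂ - θ₁)⟫) - 1
            - S * Real.sqrt ⟪θ₂ - θ₁, H (θ₂ - θ₁)⟫) /
          (S ^ 2 * ⟪θ₂ - θ₁, H (θ₂ - θ₁)⟫) := by
  set δ : E := θ₂ - θ₁ with hδdef
  by_cases hδ0 : δ = 0
  · have hθ : θ₂ = θ₁ := by
      have := sub_eq_zero.mp hδ0
      exact this
    simp [hδ0, hθ]
  -- main case
  have hθ₂ : θ₂ = θ₁ + δ := by rw [hδdef]; abel
  have hd0 : 0 < ⟪δ, H δ⟫ := hHpos δ hδ0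
  set d : ℝ := Real.sqrt ⟪δ, H δ⟫ with hddef
  have hd : 0 < d := Real.sqrt_pos.2 hd0
  have hdsq : d ^ 2 = ⟪δ, H δ⟫ := Real.sq_sqrt hd0.le
  set k : ℝ := S * d with hkdef
  have hk : 0 < k := mul_pos hS hd
  set c : ℝ → E := fun t => θ₁ + t • δ with hc
  have hcd : ∀ t : ℝ, HasDerivAt c δ t := by
    intro t
    simpa [hc] using ((hasDerivAt_id t).smul_const δ).const_add θ₁
  have hc0 : c 0 = θ₁ := by simp [hc]
  have hc1 : c 1 = θ₂ := by simp [hc, hθ₂]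
  have hφ : ∀ t, HasDerivAt (fun t => f (c t)) ⟪g (c t), δ⟫ t := by
    intro t
    simpa [Function.comp_def] using ((hg (c t)).hasFDerivAt).comp_hasDerivAt t (hcd t)
  have hφ' : ∀ t, HasDerivAt (fun t => ⟪g (c t), δ⟫) ⟪δ, Hess (c t) δ⟫ t := by
    intro t
    have h1 : HasDerivAt (fun t => g (c t)) (Hess (c t) δ) t :=
      (hHess (c t)).comp_hasDerivAt t (hcd t)
    simpa [real_inner_comm] using h1.inner ℝ (hasDerivAt_const t δ)
  have hψ : ∀ t, HasDerivAt (fun t => ⟪δ, Hess (c t) δ⟫) ⟪δ, T (c t) δ δ⟫ t := by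
    intro t
    have h1 : HasDerivAt (fun t => Hess (c t)) (T (c t) δ) t :=
      (hT (c t)).comp_hasDerivAt t (hcd t)
    have h2 : HasDerivAt (fun t => Hess (c t) δ) (T (c t) δ δ) t := by
      simpa using h1.clm_apply (hasDerivAt_const t δ)
    simpa using (hasDerivAt_const t δ).inner ℝ h2
  -- positive semidefiniteness of the Hessian
  have hpsd : ∀ θ z : E, 0 ≤ ⟪z, Hess θ z⟫ := by
    intro θ z
    have h1 := hbound θ z δ
    have h2 : (0:ℝ) ≤ S * ⟪z, Hess θ z⟫ * d := le_trans (abs_nonneg _) h1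
    nlinarith
  -- bound on the third derivative along the line
  have hτ : ∀ t : ℝ, |⟪δ, T (c t) δ δ⟫| ≤ k * ⟪δ, Hess (c t) δ⟫ := by
    intro t
    have := hbound (c t) δ δ
    calc |⟪δ, T (c t) δ δ⟫| ≤ S * ⟪δ, Hess (c t) δ⟫ * d := this
    _ = k * ⟪δ, Hess (c t) δ⟫ := by ring
  -- Grönwall step: ψ t ≤ ψ 0 * exp (k t) for t ≥ 0
  set ψ0 : ℝ := ⟪δ, Hess θ₁ δ⟫ with hψ0
  have hgron : ∀ t : ℝ, 0 ≤ t → ⟪δ, Hess (c t) δ⟫ ≤ ψ0 * Real.exp (k * t) := by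
    intro t ht
    have hanti : Antitone (fun t => ⟪δ, Hess (c t) δ⟫ * Real.exp (-(k * t))) := by
      apply antitone_of_hasDerivAt_nonpos
        (f' := fun t => ⟪δ, T (c t) δ δ⟫ * Real.exp (-(k * t))
          + ⟪δ, Hess (c t) δ⟫ * (Real.exp (-(k * t)) * (-k)))
      · intro t
        have he : HasDerivAt (fun t : ℝ => Real.exp (-(k * t))) (Real.exp (-(k * t)) * -k) t := by
          simpa using (((hasDerivAt_id t).const_mul k).neg.exp)
        exact (hψ t).mul he
      · intro t
        simp only [Pi.zero_apply]
        have h2 : ⟪δ, T (c t) δ δ⟫ ≤ k * ⟪δ, Hess (c t) δ⟫ := (le_abs_self _).trans (hτ t)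
        have h3 : (0:ℝ) < Real.exp (-(k * t)) := Real.exp_pos _
        nlinarith
    have := hanti ht
    simp only [hc0, mul_zero, neg_zero, Real.exp_zero, mul_one] at this
    have h4 : (0:ℝ) < Real.exp (k * t) := Real.exp_pos _
    have h5 : Real.exp (-(k * t)) * Real.exp (k * t) = 1 := by
      rw [← Real.exp_add]; simp
    calc ⟪δ, Hess (c t) δ⟫
        = (⟪δ, Hess (c t) δ⟫ * Real.exp (-(k * t))) * Real.exp (k * t) := by
          rw [mul_assoc, h5, mul_one]
      _ ≤ ψ0 * Real.exp (k * t) := mul_le_mul_of_nonneg_right this h4.le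
  -- first integration: φ' t ≤ φ' 0 + ψ0 * (exp (k t) - 1) / k on [0, ∞)
  have hint1 : ∀ t : ℝ, 0 ≤ t →
      ⟪g (c t), δ⟫ ≤ ⟪g θ₁, δ⟫ + ψ0 * (Real.exp (k * t) - 1) / k := by
    intro t ht
    set u : ℝ → ℝ := fun t => ⟪g (c t), δ⟫ - ψ0 * (Real.exp (k * t) - 1) / k with hu
    have hud : ∀ s, HasDerivAt u (⟪δ, Hess (c s) δ⟫ - ψ0 * Real.exp (k * s)) s := by
      intro s
      have h1 : HasDerivAt (fun t : ℝ => ψ0 * (Real.exp (k * t) - 1) / k)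
          (ψ0 * (Real.exp (k * s) * k) / k) s := by
        simpa using ((((hasDerivAt_id s).const_mul k).exp.sub_const 1).const_mul ψ0).div_const k
      have h2 := (hφ' s).sub h1
      have : ψ0 * (Real.exp (k * s) * k) / k = ψ0 * Real.exp (k * s) := by
        field_simp
      rw [this] at h2
      exact h2
    have hanti : AntitoneOn u (Set.Ici (0:ℝ)) := by
      apply antitoneOn_of_hasDerivWithinAt_nonpos (convex_Ici 0)
        (f' := fun s => ⟪δ, Hess (c s) δ⟫ - ψ0 * Real.exp (k * s))
      · exact fun s _ => (hud s).continuousAt.continuousWithinAt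
      · exact fun s _ => (hud s).hasDerivWithinAt
      · intro s hs
        rw [interior_Ici] at hs
        have := hgron s (le_of_lt hs)
        linarith
    have := hanti (Set.self_mem_Ici) (Set.mem_Ici.2 ht) ht
    simp only [hu, hc0, mul_zero, Real.exp_zero, sub_self, zero_div, mul_zero, sub_zero] at this
    linarith [this]
  -- second integration
  set v : ℝ → ℝ := fun t => f (c t) - t * ⟪g θ₁, δ⟫
      - ψ0 * (Real.exp (k * t) - 1 - k * t) / k ^ 2 with hv
  have hvd : ∀ s, HasDerivAt v
      (⟪g (c s), δ⟫ - ⟪g θ₁, δ⟫ - ψ0 * (Real.exp (k * s) - 1) / k) s := by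
    intro s
    have h1 : HasDerivAt (fun t : ℝ => t * ⟪g θ₁, δ⟫) ⟪g θ₁, δ⟫ s := by
      simpa using (hasDerivAt_id s).mul_const ⟪g θ₁, δ⟫
    have h2 : HasDerivAt (fun t : ℝ => ψ0 * (Real.exp (k * t) - 1 - k * t) / k ^ 2)
        (ψ0 * (Real.exp (k * s) * k - k) / k ^ 2) s := by
      have h3 : HasDerivAt (fun t : ℝ => Real.exp (k * t) - 1 - k * t)
          (Real.exp (k * s) * k - k) s := by
        have := (((hasDerivAt_id s).const_mul k).exp.sub_const 1).sub
          ((hasDerivAt_id s).const_mul k)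
        simpa [Pi.sub_def] using this
      exact (h3.const_mul ψ0).div_const (k ^ 2)
    have h4 := ((hφ s).sub h1).sub h2
    have h5 : ψ0 * (Real.exp (k * s) * k - k) / k ^ 2 = ψ0 * (Real.exp (k * s) - 1) / k := by
      field_simp
    rw [h5] at h4
    exact h4
  have hanti : AntitoneOn v (Set.Ici (0:ℝ)) := by
    apply antitoneOn_of_hasDerivWithinAt_nonpos (convex_Ici 0)
      (f' := fun s => ⟪g (c s), δ⟫ - ⟪g θ₁, δ⟫ - ψ0 * (Real.exp (k * s) - 1) / k)
    · exact fun s _ => (hvd s).continuousAt.continuousWithinAt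
    · exact fun s _ => (hvd s).hasDerivWithinAt
    · intro s hs
      rw [interior_Ici] at hs
      have := hint1 s (le_of_lt hs)
      linarith
  have hfin := hanti (Set.self_mem_Ici) (Set.mem_Ici.2 (zero_le_one)) zero_le_one
  simp only [hv, hc0, hc1, mul_zero, Real.exp_zero, sub_self, sub_zero, zero_mul,
    zero_div, mul_one, one_mul] at hfin
  -- hfin : f θ₂ - ⟪g θ₁, δ⟫ - ψ0 * (Real.exp k - 1 - k) / k ^ 2 ≤ f θ₁
  have hkk : k ^ 2 = S ^ 2 * ⟪δ, H δ⟫ := by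
    rw [hkdef]; rw [mul_pow, hdsq]
  calc f θ₂ - f θ₁ - ⟪g θ₁, δ⟫ ≤ ψ0 * (Real.exp k - 1 - k) / k ^ 2 := by linarith
  _ = ψ0 * (Real.exp (S * d) - 1 - S * d) / (S ^ 2 * ⟪δ, H δ⟫) := by rw [← hkk, ← hkdef]
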